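/- If A and B are reducibility candidates, then A ⊕ B (the closure of {α.t + β.r | t ∈ A, r ∈ B} under CR2 and CR3) is a reducibility candidate. -/

import Mathlib

open scoped NNReal

namespace LCA

/-! ## Types of λCA -/

mutual
inductive UTy : Type
  | var : ℕ → UTy
  | arrow : UTy → Ty → UTy
  | all : UTy → UTy
inductive Ty : Type
  | u : UTy → Ty
  | add : Ty → Ty → Ty
  | zero : Ty
end

mutual
def UTy.shift (d c : ℕ) : UTy → UTy
  | .var n => .var (if n < c then n else n + d)
  | .arrow U T => .arrow (U.shift d c) (T.shift d c)
  | .all U => .all (U.shift d (c+1))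
def Ty.shift (d c : ℕ) : Ty → Ty
  | .u U => .u (U.shift d c)
  | .add T R => .add (T.shift d c) (R.shift d c)
  | .zero => .zero
end

mutual
def UTy.subst (k : ℕ) (V : UTy) : UTy → UTy
  | .var n => if n = k then V else .var (if k < n then n - 1 else n)
  | .arrow U T => .arrow (UTy.subst k V U) (Ty.subst k V T)
  | .all U => .all (UTy.subst (k+1) (V.shift 1 0) U)
termination_by t => sizeOf t
def Ty.subst (k : ℕ) (V : UTy) : Ty → Ty
  | .u U => .u (UTy.subst k V U)
  | .add T R => .add (Ty.subst k V T) (Ty.subst k V R)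
  | .zero => .zero
termination_by t => sizeOf t
end

/- Type equivalence: least congruence with `T + 0̄ ≡ T`, commutativity and
associativity of `+`. -/
mutual
inductive UEq : UTy → UTy → Prop
  | refl : ∀ U, UEq U U
  | symm : ∀ {U V}, UEq U V → UEq V U
  | trans : ∀ {U V W}, UEq U V → UEq V W → UEq U W
  | arrow : ∀ {U V T S}, UEq U V → TyEq T S → UEq (.arrow U T) (.arrow V S)
  | all : ∀ {U V}, UEq U V → UEq (.all U) (.all V)
inductive TyEq : Ty → Ty → Prop
  | refl : ∀ T, TyEq T T
  | symm : ∀ {T R}, TyEq T R → TyEq R T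
  | trans : ∀ {T R S}, TyEq T R → TyEq R S → TyEq T S
  | u : ∀ {U V}, UEq U V → TyEq (.u U) (.u V)
  | addCong : ∀ {T T' R R'}, TyEq T T' → TyEq R R' → TyEq (.add T R) (.add T' R')
  | addZero : ∀ T, TyEq (.add T .zero) T
  | comm : ∀ T R, TyEq (.add T R) (.add R T)
  | assoc : ∀ T R S, TyEq (.add T (.add R S)) (.add (.add T R) S)
end

/-- `nTy n T` is the `n`-fold sum `T + ⋯ + T`, with `nTy 0 T = 0̄`. -/
def nTy : ℕ → Ty → Ty
  | 0, _ => .zero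
  | 1, T => T
  | n+2, T => .add T (nTy (n+1) T)

/-- The imprecision order `≼` on types (Table 4). -/
inductive Pce : Ty → Ty → Prop
  | wk : ∀ {m n : ℕ} (T : Ty), m ≤ n → Pce (nTy m T) (nTy n T)
  | ofEq : ∀ {T R}, TyEq T R → Pce T R
  | trans : ∀ {T S R}, Pce T S → Pce S R → Pce T R
  | addCong : ∀ {T₁ T₂ S₁ S₂}, Pce T₁ T₂ → Pce S₁ S₂ → Pce (.add T₁ S₁) (.add T₂ S₂)
  | arrow : ∀ {U₁ U₂ : UTy} {T₁ T₂ : Ty}, Pce (.u U₂) (.u U₁) → Pce T₁ T₂ →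
      Pce (.u (.arrow U₁ T₁)) (.u (.arrow U₂ T₂))
  | all : ∀ {U V : UTy}, Pce (.u U) (.u V) → Pce (.u (.all U)) (.u (.all V))

/-! ## Terms of λCA -/

inductive Tm : Type
  | var : ℕ → Tm
  | lam : UTy → Tm → Tm
  | tlam : Tm → Tm
  | app : Tm → Tm → Tm
  | tapp : Tm → UTy → Tm
  | zero : Tm
  | smul : ℝ≥0 → Tm → Tm
  | add : Tm → Tm → Tm

/-- Basis terms: variables, abstractions and type abstractions. -/
inductive IsBasis : Tm → Prop
  | var : ∀ n, IsBasis (.var n)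
  | lam : ∀ U t, IsBasis (.lam U t)
  | tlam : ∀ t, IsBasis (.tlam t)

def Tm.shift (d : ℕ) : ℕ → Tm → Tm
  | c, .var n => .var (if n < c then n else n + d)
  | c, .lam U t => .lam U (Tm.shift d (c+1) t)
  | c, .tlam t => .tlam (Tm.shift d c t)
  | c, .app t r => .app (Tm.shift d c t) (Tm.shift d c r)
  | c, .tapp t U => .tapp (Tm.shift d c t) U
  | _, .zero => .zero
  | c, .smul a t => .smul a (Tm.shift d c t)
  | c, .add t r => .add (Tm.shift d c t) (Tm.shift d c r)

def Tm.tshift (d : ℕ) : ℕ → Tm → Tm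
  | _, .var n => .var n
  | c, .lam U t => .lam (U.shift d c) (Tm.tshift d c t)
  | c, .tlam t => .tlam (Tm.tshift d (c+1) t)
  | c, .app t r => .app (Tm.tshift d c t) (Tm.tshift d c r)
  | c, .tapp t U => .tapp (Tm.tshift d c t) (U.shift d c)
  | _, .zero => .zero
  | c, .smul a t => .smul a (Tm.tshift d c t)
  | c, .add t r => .add (Tm.tshift d c t) (Tm.tshift d c r)

/-- Capture-avoiding substitution `t[s/x]` (de Bruijn). It acts linearly on
linear combinations. -/
def Tm.subst : ℕ → Tm → Tm → Tm
  | k, s, .var n => if n = k then s else .var (if k < n then n - 1 else n)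
  | k, s, .lam U t => .lam U (Tm.subst (k+1) (s.shift 1 0) t)
  | k, s, .tlam t => .tlam (Tm.subst k (s.tshift 1 0) t)
  | k, s, .app t r => .app (Tm.subst k s t) (Tm.subst k s r)
  | k, s, .tapp t U => .tapp (Tm.subst k s t) U
  | _, _, .zero => .zero
  | k, s, .smul a t => .smul a (Tm.subst k s t)
  | k, s, .add t r => .add (Tm.subst k s t) (Tm.subst k s r)

/-- Substitution `t[U/X]` of a unit type for a type variable in a term. -/
def Tm.tsubst : ℕ → UTy → Tm → Tm
  | _, _, .var n => .var n
  | k, V, .lam U t => .lam (UTy.subst k V U) (Tm.tsubst k V t)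
  | k, V, .tlam t => .tlam (Tm.tsubst (k+1) (V.shift 1 0) t)
  | k, V, .app t r => .app (Tm.tsubst k V t) (Tm.tsubst k V r)
  | k, V, .tapp t U => .tapp (Tm.tsubst k V t) (UTy.subst k V U)
  | _, _, .zero => .zero
  | k, V, .smul a t => .smul a (Tm.tsubst k V t)
  | k, V, .add t r => .add (Tm.tsubst k V t) (Tm.tsubst k V r)

/-! ## Typing -/

abbrev Ctx := List UTy

def sumTy : List Ty → Ty
  | [] => .zero
  | [T] => T
  | T :: Ts => .add T (sumTy Ts)

/-- Typing rules of λCA (Table 3). -/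
inductive HasTy : Ctx → Tm → Ty → Prop
  | var : ∀ {Γ : Ctx} {n U}, Γ[n]? = some U → HasTy Γ (.var n) (.u U)
  | zero : ∀ {Γ}, HasTy Γ .zero .zero
  | lam : ∀ {Γ U t T}, HasTy (U :: Γ) t T → HasTy Γ (.lam U t) (.u (.arrow U T))
  | app : ∀ {Γ t r U} {β : ℕ} {Ts : List Ty},
      HasTy Γ t (sumTy (Ts.map fun Ti => .u (.arrow U Ti))) →
      HasTy Γ r (nTy β (.u U)) →
      HasTy Γ (.app t r) (sumTy (Ts.map fun Ti => nTy β Ti))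
  | tlam : ∀ {Γ t U}, HasTy (Γ.map (UTy.shift 1 0)) t (.u U) →
      HasTy Γ (.tlam t) (.u (.all U))
  | tapp : ∀ {Γ t U V}, HasTy Γ t (.u (.all U)) →
      HasTy Γ (.tapp t V) (.u (UTy.subst 0 V U))
  | addI : ∀ {Γ t r T R}, HasTy Γ t T → HasTy Γ r R → HasTy Γ (.add t r) (.add T R)
  | smulI : ∀ {Γ t T} (a : ℝ≥0), HasTy Γ t T → HasTy Γ (.smul a t) (nTy ⌊a⌋₊ T)
  | eq : ∀ {Γ t T R}, HasTy Γ t T → TyEq T R → HasTy Γ t R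

/-! ## Reduction (Table 2), modulo AC of `+` -/

/-- AC-congruence on terms: commutativity and associativity of `+`. -/
inductive ACEq : Tm → Tm → Prop
  | refl : ∀ t, ACEq t t
  | symm : ∀ {t r}, ACEq t r → ACEq r t
  | trans : ∀ {t r s}, ACEq t r → ACEq r s → ACEq t s
  | comm : ∀ t r, ACEq (.add t r) (.add r t)
  | assoc : ∀ t r s, ACEq (.add t (.add r s)) (.add (.add t r) s)
  | addCong : ∀ {t t' r r'}, ACEq t t' → ACEq r r' → ACEq (.add t r) (.add t' r')
  | smulCong : ∀ {t t'} (a : ℝ≥0), ACEq t t' → ACEq (.smul a t) (.smul a t')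
  | appCong : ∀ {t t' r r'}, ACEq t t' → ACEq r r' → ACEq (.app t r) (.app t' r')
  | tappCong : ∀ {t t'} (U : UTy), ACEq t t' → ACEq (.tapp t U) (.tapp t' U)
  | lamCong : ∀ {t t'} (U : UTy), ACEq t t' → ACEq (.lam U t) (.lam U t')
  | tlamCong : ∀ {t t'}, ACEq t t' → ACEq (.tlam t) (.tlam t')

/-- One-step rewrite rules (Table 2), with contextual congruence. -/
inductive Step : Tm → Tm → Prop
  -- Group E
  | addZero : ∀ u, Step (.add u .zero) u
  | zeroSmul : ∀ u, Step (.smul 0 u) .zero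
  | oneSmul : ∀ u, Step (.smul 1 u) u
  | smulZero : ∀ a, Step (.smul a .zero) .zero
  | smulSmul : ∀ a b u, Step (.smul a (.smul b u)) (.smul (a*b) u)
  | smulAdd : ∀ a u v, Step (.smul a (.add u v)) (.add (.smul a u) (.smul a v))
  -- Group F
  | factor : ∀ a b u, Step (.add (.smul a u) (.smul b u)) (.smul (a+b) u)
  | factorOne : ∀ a u, Step (.add (.smul a u) u) (.smul (a+1) u)
  | factorBare : ∀ u, Step (.add u u) (.smul 2 u)
  -- Group A
  | appAddL : ∀ u v w, Step (.app (.add u v) w) (.add (.app u w) (.app v w))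
  | appAddR : ∀ u v w, Step (.app w (.add u v)) (.add (.app w u) (.app w v))
  | appSmulL : ∀ a u v, Step (.app (.smul a u) v) (.smul a (.app u v))
  | appSmulR : ∀ a u v, Step (.app v (.smul a u)) (.smul a (.app v u))
  | appZeroL : ∀ u, Step (.app .zero u) .zero
  | appZeroR : ∀ u, Step (.app u .zero) .zero
  -- β-reduction
  | beta : ∀ U t b, IsBasis b → Step (.app (.lam U t) b) (Tm.subst 0 b t)
  | tbeta : ∀ t U, Step (.tapp (.tlam t) U) (Tm.tsubst 0 U t)
  -- contextual congruence
  | addL : ∀ {t t'} (r), Step t t' → Step (.add t r) (.add t' r)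
  | smulC : ∀ {t t'} (a : ℝ≥0), Step t t' → Step (.smul a t) (.smul a t')
  | appL : ∀ {t t'} (r), Step t t' → Step (.app t r) (.app t' r)
  | appR : ∀ {r r'} (t), Step r r' → Step (.app t r) (.app t r')
  | tappC : ∀ {t t'} (U), Step t t' → Step (.tapp t U) (.tapp t' U)
  | lamC : ∀ {t t'} (U), Step t t' → Step (.lam U t) (.lam U t')
  | tlamC : ∀ {t t'}, Step t t' → Step (.tlam t) (.tlam t')

/-- One-step reduction, modulo AC of `+`. -/
def Red (t s : Tm) : Prop := ∃ t' s', ACEq t t' ∧ Step t' s' ∧ ACEq s' s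

def RedStar : Tm → Tm → Prop := Relation.ReflTransGen Red

/-- Strong normalisation: no infinite reduction sequence starts from `t`. -/
def SN (t : Tm) : Prop := Acc (fun a b => Red b a) t

/-! ## Values, neutral terms, reducibility candidates -/

def Tm.ClosedAt : ℕ → Tm → Prop
  | k, .var n => n < k
  | k, .lam _ t => Tm.ClosedAt (k+1) t
  | k, .tlam t => Tm.ClosedAt k t
  | k, .app t r => Tm.ClosedAt k t ∧ Tm.ClosedAt k r
  | k, .tapp t _ => Tm.ClosedAt k t
  | _, .zero => True
  | k, .smul _ t => Tm.ClosedAt k t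
  | k, .add t r => Tm.ClosedAt k t ∧ Tm.ClosedAt k r

def Tm.Closed (t : Tm) : Prop := Tm.ClosedAt 0 t

/-- The value grammar `v ::= λx:U.t | ΛX.t | v + v | α.v`. -/
inductive ValShape : Tm → Prop
  | lam : ∀ U t, ValShape (.lam U t)
  | tlam : ∀ t, ValShape (.tlam t)
  | add : ∀ {v w}, ValShape v → ValShape w → ValShape (.add v w)
  | smul : ∀ (a : ℝ≥0) {v}, ValShape v → ValShape (.smul a v)

def IsValue (t : Tm) : Prop := t.Closed ∧ ValShape t

/-- Neutral terms: closed terms that are not values. -/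
def Neutral (t : Tm) : Prop := t.Closed ∧ ¬ ValShape t

/-- Strongly normalising closed terms. -/
def SN0 : Set Tm := {t | t.Closed ∧ SN t}

/-- Reducibility candidates. -/
structure IsCand (A : Set Tm) : Prop where
  cr1 : A ⊆ SN0
  cr2 : ∀ ⦃t⦄, t ∈ A → ∀ ⦃t'⦄, RedStar t t' → t' ∈ A
  cr3 : ∀ ⦃t⦄, Neutral t → (∀ t', Red t t' → t' ∈ A) → t ∈ A

/-- Closure of `∅` under (CR3). -/
inductive EmptyClP : Tm → Prop
  | neu : ∀ {t}, Neutral t → (∀ t', Red t t' → EmptyClP t') → EmptyClP t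

def EmptyCl : Set Tm := {t | EmptyClP t}

/-- `A ⊕ B`: closure of `{α.t + β.r | t ∈ A, r ∈ B}` under (CR2) and (CR3). -/
inductive OplusClP (A B : Set Tm) : Tm → Prop
  | base : ∀ (a b : ℝ≥0) {t r}, t ∈ A → r ∈ B → OplusClP A B (.add (.smul a t) (.smul b r))
  | red : ∀ {t t'}, OplusClP A B t → RedStar t t' → OplusClP A B t'
  | neu : ∀ {t}, Neutral t → (∀ t', Red t t' → OplusClP A B t') → OplusClP A B t

def OplusCl (A B : Set Tm) : Set Tm := {t | OplusClP A B t}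

/-- `A → B`: closure under (CR3) of `{t | ∀ basis b ∈ A, t b ∈ B}`. -/
inductive ArrowClP (A B : Set Tm) : Tm → Prop
  | base : ∀ {t}, (∀ b, IsBasis b → b ∈ A → Tm.app t b ∈ B) → ArrowClP A B t
  | neu : ∀ {t}, Neutral t → (∀ t', Red t t' → ArrowClP A B t') → ArrowClP A B t

def ArrowCl (A B : Set Tm) : Set Tm := {t | ArrowClP A B t}

/-- `Λ A = {t | ∀ V, t@V ∈ A}`. -/
def LamSet (A : Set Tm) : Set Tm := {t | ∀ V : UTy, Tm.tapp t V ∈ A}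

def extRho (S : Set Tm) (ρ : ℕ → Set Tm) : ℕ → Set Tm
  | 0 => S
  | n+1 => ρ n

/- The reducibility model `⟦·⟧_ρ`. -/
mutual
def interpU (ρ : ℕ → Set Tm) : UTy → Set Tm
  | .var n => ρ n
  | .arrow U T => ArrowCl (interpU ρ U) (interpT ρ T)
  | .all U => ⋂ S ∈ {S : Set Tm | IsCand S}, LamSet (interpU (extRho S ρ) U)
termination_by t => sizeOf t
def interpT (ρ : ℕ → Set Tm) : Ty → Set Tm
  | .u U => interpU ρ U
  | .add T R => OplusCl (interpT ρ T) (interpT ρ R)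
  | .zero => EmptyCl
termination_by t => sizeOf t
end

/-! ## Parallel substitutions (for the adequacy statement) -/

def liftTySub (δ : ℕ → UTy) : ℕ → UTy
  | 0 => .var 0
  | n+1 => (δ n).shift 1 0

mutual
def UTy.substPar (δ : ℕ → UTy) : UTy → UTy
  | .var n => δ n
  | .arrow U T => .arrow (U.substPar δ) (T.substPar δ)
  | .all U => .all (U.substPar (liftTySub δ))
termination_by t => sizeOf t
def Ty.substPar (δ : ℕ → UTy) : Ty → Ty
  | .u U => .u (U.substPar δ)
  | .add T R => .add (T.substPar δ) (R.substPar δ)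
  | .zero => .zero
termination_by t => sizeOf t
end

def Tm.tsubstPar (δ : ℕ → UTy) : Tm → Tm
  | .var n => .var n
  | .lam U t => .lam (U.substPar δ) (Tm.tsubstPar δ t)
  | .tlam t => .tlam (Tm.tsubstPar (liftTySub δ) t)
  | .app t r => .app (Tm.tsubstPar δ t) (Tm.tsubstPar δ r)
  | .tapp t U => .tapp (Tm.tsubstPar δ t) (U.substPar δ)
  | .zero => .zero
  | .smul a t => .smul a (Tm.tsubstPar δ t)
  | .add t r => .add (Tm.tsubstPar δ t) (Tm.tsubstPar δ r)

def liftTmSub (σ : ℕ → Tm) : ℕ → Tm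
  | 0 => .var 0
  | n+1 => (σ n).shift 1 0

def Tm.substPar (σ : ℕ → Tm) : Tm → Tm
  | .var n => σ n
  | .lam U t => .lam U (Tm.substPar (liftTmSub σ) t)
  | .tlam t => .tlam (Tm.substPar (fun n => (σ n).tshift 1 0) t)
  | .app t r => .app (Tm.substPar σ t) (Tm.substPar σ r)
  | .tapp t U => .tapp (Tm.substPar σ t) U
  | .zero => .zero
  | .smul a t => .smul a (Tm.substPar σ t)
  | .add t r => .add (Tm.substPar σ t) (Tm.substPar σ r)

/-! ## The Additive calculus -/

inductive ATm : Type
  | var : ℕ → ATm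
  | lam : UTy → ATm → ATm
  | tlam : ATm → ATm
  | app : ATm → ATm → ATm
  | tapp : ATm → UTy → ATm
  | zero : ATm
  | add : ATm → ATm → ATm

/-- `nA n t` is the `n`-fold sum `t + ⋯ + t`, with `nA 0 t = 0`. -/
def nA : ℕ → ATm → ATm
  | 0, _ => .zero
  | 1, t => t
  | n+2, t => .add t (nA (n+1) t)

/-- The relation `⊑` on Additive terms. -/
inductive ASub : ATm → ATm → Prop
  | sum : ∀ {m n : ℕ} (t : ATm), m ≤ n → ASub (nA m t) (nA n t)
  | lam : ∀ {t t'} (U : UTy), ASub t t' → ASub (.lam U t) (.lam U t')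
  | tlam : ∀ {t t'}, ASub t t' → ASub (.tlam t) (.tlam t')
  | tapp : ∀ {t t'} (U : UTy), ASub t t' → ASub (.tapp t U) (.tapp t' U)
  | app : ∀ {t t' r r'}, ASub t t' → ASub r r' → ASub (.app t r) (.app t' r')
  | add : ∀ {t t' r r'}, ASub t t' → ASub r r' → ASub (.add t r) (.add t' r')
  | trans : ∀ {t r s}, ASub t r → ASub r s → ASub t s

/-- Typing rules of the Additive calculus: those of λCA without `sI`. -/
inductive AHasTy : Ctx → ATm → Ty → Prop
  | var : ∀ {Γ : Ctx} {n U}, Γ[n]? = some U → AHasTy Γ (.var n) (.u U)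
  | zero : ∀ {Γ}, AHasTy Γ .zero .zero
  | lam : ∀ {Γ U t T}, AHasTy (U :: Γ) t T → AHasTy Γ (.lam U t) (.u (.arrow U T))
  | app : ∀ {Γ t r U} {β : ℕ} {Ts : List Ty},
      AHasTy Γ t (sumTy (Ts.map fun Ti => .u (.arrow U Ti))) →
      AHasTy Γ r (nTy β (.u U)) →
      AHasTy Γ (.app t r) (sumTy (Ts.map fun Ti => nTy β Ti))
  | tlam : ∀ {Γ t U}, AHasTy (Γ.map (UTy.shift 1 0)) t (.u U) →
      AHasTy Γ (.tlam t) (.u (.all U))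
  | tapp : ∀ {Γ t U V}, AHasTy Γ t (.u (.all U)) →
      AHasTy Γ (.tapp t V) (.u (UTy.subst 0 V U))
  | addI : ∀ {Γ t r T R}, AHasTy Γ t T → AHasTy Γ r R → AHasTy Γ (.add t r) (.add T R)
  | eq : ∀ {Γ t T R}, AHasTy Γ t T → TyEq T R → AHasTy Γ t R

/-- The abstraction function `σ : λCA → Additive`. -/
noncomputable def absTm : Tm → ATm
  | .var n => .var n
  | .lam U t => .lam U (absTm t)
  | .tlam t => .tlam (absTm t)
  | .app t r => .app (absTm t) (absTm r)
  | .tapp t U => .tapp (absTm t) U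
  | .zero => .zero
  | .smul a t => nA ⌊a⌋₊ (absTm t)
  | .add t r => .add (absTm t) (absTm r)

end LCA

/-! ## System F with pairs -/

namespace Fp

inductive FTm : Type
  | var : ℕ → FTm
  | lam : FTm → FTm
  | app : FTm → FTm → FTm
  | star : FTm
  | pair : FTm → FTm → FTm
  | p1 : FTm → FTm
  | p2 : FTm → FTm

/-- The relation `⊑_F` on terms of System F with pairs. -/
inductive FSub : FTm → FTm → Prop
  | star : ∀ t, FSub .star t
  | refl : ∀ t, FSub t t
  | dup : ∀ t, FSub t (.pair t t)
  | pair : ∀ {t t' r r'}, FSub t t' → FSub r r' → FSub (.pair t r) (.pair t' r')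
  | app : ∀ {t t' r r'}, FSub t t' → FSub r r' → FSub (.app t r) (.app t' r')
  | lam : ∀ {t t'}, FSub t t' → FSub (.lam t) (.lam t')
  | p1 : ∀ {t t'}, FSub t t' → FSub (.p1 t) (.p1 t')
  | p2 : ∀ {t t'}, FSub t t' → FSub (.p2 t) (.p2 t')
  | trans : ∀ {t r s}, FSub t r → FSub r s → FSub t s

end Fp
namespace LCA

open Relation

/-! ### Basic facts about `ACEq`, `Red`, `SN` -/

theorem aceq_equiv : Equivalence ACEq :=
  ⟨ACEq.refl, ACEq.symm, ACEq.trans⟩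

instance tmSetoid : Setoid Tm := ⟨ACEq, aceq_equiv⟩

theorem red_of_aceq_left {a a' b : Tm} (e : ACEq a a') (h : Red a' b) : Red a b := by
  obtain ⟨x, y, e1, st, e2⟩ := h
  exact ⟨x, y, e.trans e1, st, e2⟩

theorem red_of_aceq_right {a b b' : Tm} (h : Red a b) (e : ACEq b b') : Red a b' := by
  obtain ⟨x, y, e1, st, e2⟩ := h
  exact ⟨x, y, e1, st, e2.trans e⟩

theorem sn_red {a b : Tm} (h : SN a) (hr : Red a b) : SN b := h.inv hr

theorem sn_aceq {a b : Tm} (e : ACEq a b) (h : SN a) : SN b := by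
  constructor
  intro c hc
  exact sn_red h (red_of_aceq_left e hc)

theorem red_of_step {a b : Tm} (h : Step a b) : Red a b :=
  ⟨a, b, ACEq.refl a, h, ACEq.refl b⟩

/-! ### Red congruences -/

theorem red_appL {t t' : Tm} (r : Tm) (h : Red t t') : Red (.app t r) (.app t' r) := by
  obtain ⟨x, y, e1, st, e2⟩ := h
  exact ⟨.app x r, .app y r, .appCong e1 (.refl r), .appL r st, .appCong e2 (.refl r)⟩

theorem red_appR {t t' : Tm} (r : Tm) (h : Red t t') : Red (.app r t) (.app r t') := by
  obtain ⟨x, y, e1, st, e2⟩ := h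
  exact ⟨.app r x, .app r y, .appCong (.refl r) e1, .appR r st, .appCong (.refl r) e2⟩

theorem red_tapp {t t' : Tm} (U : UTy) (h : Red t t') : Red (.tapp t U) (.tapp t' U) := by
  obtain ⟨x, y, e1, st, e2⟩ := h
  exact ⟨.tapp x U, .tapp y U, .tappCong U e1, .tappC U st, .tappCong U e2⟩

theorem red_smul {t t' : Tm} (a : ℝ≥0) (h : Red t t') : Red (.smul a t) (.smul a t') := by
  obtain ⟨x, y, e1, st, e2⟩ := h
  exact ⟨.smul a x, .smul a y, .smulCong a e1, .smulC a st, .smulCong a e2⟩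

theorem red_lam {t t' : Tm} (U : UTy) (h : Red t t') : Red (.lam U t) (.lam U t') := by
  obtain ⟨x, y, e1, st, e2⟩ := h
  exact ⟨.lam U x, .lam U y, .lamCong U e1, .lamC U st, .lamCong U e2⟩

theorem red_tlam {t t' : Tm} (h : Red t t') : Red (.tlam t) (.tlam t') := by
  obtain ⟨x, y, e1, st, e2⟩ := h
  exact ⟨.tlam x, .tlam y, .tlamCong e1, .tlamC st, .tlamCong e2⟩

theorem red_addL {t t' : Tm} (r : Tm) (h : Red t t') : Red (.add t r) (.add t' r) := by
  obtain ⟨x, y, e1, st, e2⟩ := h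
  exact ⟨.add x r, .add y r, .addCong e1 (.refl r), .addL r st, .addCong e2 (.refl r)⟩

theorem red_addR {t t' : Tm} (r : Tm) (h : Red t t') : Red (.add r t) (.add r t') := by
  obtain ⟨x, y, e1, st, e2⟩ := h
  exact ⟨.add x r, .add y r, (ACEq.comm r t).trans (.addCong e1 (.refl r)), .addL r st,
    (ACEq.comm y r).trans (ACEq.addCong (.refl r) e2)⟩

/-! ### Subterms -/

inductive Sub : Tm → Tm → Prop
  | lam : ∀ U t, Sub t (.lam U t)
  | tlam : ∀ t, Sub t (.tlam t)
  | appL : ∀ t r, Sub t (.app t r)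
  | appR : ∀ t r, Sub r (.app t r)
  | tapp : ∀ t U, Sub t (.tapp t U)
  | smul : ∀ (a : ℝ≥0) t, Sub t (.smul a t)
  | addL : ∀ t r, Sub t (.add t r)
  | addR : ∀ t r, Sub r (.add t r)

def tsize : Tm → ℕ
  | .var _ => 1
  | .lam _ t => tsize t + 1
  | .tlam t => tsize t + 1
  | .app t r => tsize t + tsize r + 1
  | .tapp t _ => tsize t + 1
  | .zero => 1
  | .smul _ t => tsize t + 1
  | .add t r => tsize t + tsize r + 1

theorem sub_tsize {s t : Tm} (h : Sub s t) : tsize s < tsize t := by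
  cases h <;> simp [tsize] <;> omega

theorem sub_red_lift {s u r : Tm} (h : Sub s u) (hr : Red s r) :
    ∃ u', Red u u' ∧ Sub r u' := by
  cases h with
  | lam U t => exact ⟨_, red_lam U hr, .lam U r⟩
  | tlam t => exact ⟨_, red_tlam hr, .tlam r⟩
  | appL t x => exact ⟨_, red_appL x hr, .appL r x⟩
  | appR x t => exact ⟨_, red_appR x hr, .appR x r⟩
  | tapp t U => exact ⟨_, red_tapp U hr, .tapp r U⟩
  | smul a t => exact ⟨_, red_smul a hr, .smul a r⟩
  | addL t x => exact ⟨_, red_addL x hr, .addL r x⟩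
  | addR x t => exact ⟨_, red_addR x hr, .addR x r⟩

theorem substar_red_lift {s t r : Tm} (h : ReflTransGen Sub s t) (hr : Red s r) :
    ∃ t', Red t t' ∧ ReflTransGen Sub r t' := by
  induction h using ReflTransGen.head_induction_on generalizing r with
  | refl => exact ⟨r, hr, .refl⟩
  | head hsub _ ih =>
    obtain ⟨u', hu', hsub'⟩ := sub_red_lift hsub hr
    obtain ⟨t', ht', hsub''⟩ := ih hu'
    exact ⟨t', ht', .head hsub' hsub''⟩

/-- `Red`-reducts and subterms. -/
def QR (s t : Tm) : Prop := Red t s ∨ Sub s t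

theorem acc_qr_of_substar {s t : Tm} (h : Acc QR t) (hs : ReflTransGen Sub s t) : Acc QR s := by
  induction hs using ReflTransGen.head_induction_on with
  | refl => exact h
  | head hsub _ ih => exact ih.inv (Or.inr hsub)

theorem acc_qr_of_sn {t : Tm} (h : SN t) : Acc QR t := by
  induction h with
  | intro t _ IH =>
    suffices H : ∀ n s, tsize s ≤ n → ReflTransGen Sub s t → Acc QR s from
      H (tsize t) t le_rfl .refl
    intro n
    induction n with
    | zero =>
      intro s hs _
      cases s <;> simp [tsize] at hs
    | succ n ih =>
      intro s hs hsub
      constructor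
      intro r hr
      rcases hr with hred | hsub1
      · obtain ⟨t', ht', hsub'⟩ := substar_red_lift hsub hred
        exact acc_qr_of_substar (IH t' ht') hsub'
      · exact ih r (by have := sub_tsize hsub1; omega) (ReflTransGen.head hsub1 hsub)

theorem sn_of_acc_qr {t : Tm} (h : Acc QR t) : SN t := by
  induction h with
  | intro t _ ih => exact Acc.intro t fun s hs => ih s (Or.inl hs)

theorem sn_substar {s t : Tm} (h : SN t) (hs : ReflTransGen Sub s t) : SN s :=
  sn_of_acc_qr (acc_qr_of_substar (acc_qr_of_sn h) hs)

theorem sn_sub {s t : Tm} (h : SN t) (hs : Sub s t) : SN s :=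
  sn_substar h (ReflTransGen.single hs)

/-! ### Linear combinations of SN terms -/

inductive Lin : Tm → Prop
  | sn : ∀ {t}, SN t → Lin t
  | zero : Lin .zero
  | add : ∀ {t r}, Lin t → Lin r → Lin (.add t r)
  | smul : ∀ (a : ℝ≥0) {t}, Lin t → Lin (.smul a t)

theorem lin_add_inv {t r : Tm} (h : Lin (.add t r)) : Lin t ∧ Lin r := by
  cases h with
  | sn h => exact ⟨.sn (sn_sub h (.addL t r)), .sn (sn_sub h (.addR t r))⟩
  | add h1 h2 => exact ⟨h1, h2⟩

theorem lin_smul_inv {a : ℝ≥0} {t : Tm} (h : Lin (.smul a t)) : Lin t := by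
  cases h with
  | sn h => exact .sn (sn_sub h (.smul a t))
  | smul a h => exact h

/-! ### Atoms and weight -/

def atoms : Tm → Multiset Tm
  | .add t r => atoms t + atoms r
  | .smul _ t => atoms t
  | .zero => 0
  | t => {t}

def wgt : Tm → ℕ
  | .add t r => wgt t + wgt r + 1
  | .smul _ t => 2 * wgt t
  | .zero => 1
  | _ => 1

@[simp] theorem atoms_add (t r : Tm) : atoms (.add t r) = atoms t + atoms r := rfl
@[simp] theorem atoms_smul (a : ℝ≥0) (t : Tm) : atoms (.smul a t) = atoms t := rfl
@[simp] theorem atoms_zero : atoms .zero = 0 := rfl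
@[simp] theorem atoms_var (n : ℕ) : atoms (.var n) = {.var n} := rfl
@[simp] theorem atoms_lam (U : UTy) (t : Tm) : atoms (.lam U t) = {.lam U t} := rfl
@[simp] theorem atoms_tlam (t : Tm) : atoms (.tlam t) = {.tlam t} := rfl
@[simp] theorem atoms_app (t r : Tm) : atoms (.app t r) = {.app t r} := rfl
@[simp] theorem atoms_tapp (t : Tm) (U : UTy) : atoms (.tapp t U) = {.tapp t U} := rfl

@[simp] theorem wgt_add (t r : Tm) : wgt (.add t r) = wgt t + wgt r + 1 := rfl
@[simp] theorem wgt_smul (a : ℝ≥0) (t : Tm) : wgt (.smul a t) = 2 * wgt t := rfl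
@[simp] theorem wgt_zero : wgt .zero = 1 := rfl
@[simp] theorem wgt_var (n : ℕ) : wgt (.var n) = 1 := rfl
@[simp] theorem wgt_lam (U : UTy) (t : Tm) : wgt (.lam U t) = 1 := rfl
@[simp] theorem wgt_tlam (t : Tm) : wgt (.tlam t) = 1 := rfl
@[simp] theorem wgt_app (t r : Tm) : wgt (.app t r) = 1 := rfl
@[simp] theorem wgt_tapp (t : Tm) (U : UTy) : wgt (.tapp t U) = 1 := rfl

theorem wgt_pos : ∀ t : Tm, 1 ≤ wgt t := by
  intro t
  induction t <;> simp <;> omega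

theorem atoms_substar {b x : Tm} (h : b ∈ atoms x) : Relation.ReflTransGen Sub b x := by
  induction x with
  | add t r iht ihr =>
    rw [atoms_add, Multiset.mem_add] at h
    rcases h with h | h
    · exact (iht h).tail (.addL t r)
    · exact (ihr h).tail (.addR t r)
  | smul a t ih => exact (ih h).tail (.smul a t)
  | zero => simp at h
  | var n => rw [atoms_var, Multiset.mem_singleton] at h; subst h; exact .refl
  | lam U t iht => rw [atoms_lam, Multiset.mem_singleton] at h; subst h; exact .refl
  | tlam t iht => rw [atoms_tlam, Multiset.mem_singleton] at h; subst h; exact .refl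
  | app t r iht ihr => rw [atoms_app, Multiset.mem_singleton] at h; subst h; exact .refl
  | tapp t U iht => rw [atoms_tapp, Multiset.mem_singleton] at h; subst h; exact .refl

/-! ### The quotient by AC-equivalence and the atom order -/

def TmQ := Quotient tmSetoid

def toQ (t : Tm) : TmQ := Quotient.mk tmSetoid t

def atomsQ (t : Tm) : Multiset TmQ := (atoms t).map toQ

def AtomLt (q p : TmQ) : Prop :=
  ∃ a x b, SN a ∧ Red a x ∧ b ∈ atoms x ∧ p = toQ a ∧ q = toQ b

theorem acc_atomLt_of_sn {a : Tm} (h : SN a) : Acc AtomLt (toQ a) := by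
  have hq : Acc (Relation.TransGen QR) a := (acc_qr_of_sn h).transGen
  clear h
  induction hq with
  | intro a _ IH =>
    constructor
    rintro q ⟨a₀, x, b, _, hred, hb, hp, hq⟩
    have e : ACEq a a₀ := Quotient.exact hp
    have hax : Red a x := red_of_aceq_left e hred
    have hbx : Relation.ReflTransGen Sub b x := atoms_substar hb
    have htg : Relation.TransGen QR b a := by
      refine Relation.TransGen.tail' ?_ (Or.inl hax)
      exact Relation.ReflTransGen.mono (fun _ _ h => Or.inr h) _ _ hbx
    subst hq
    exact IH _ htg

theorem atomLt_wf : WellFounded AtomLt := by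
  constructor
  intro p
  induction p using Quotient.ind with
  | _ a =>
    by_cases h : SN a
    · exact acc_atomLt_of_sn h
    · constructor
      rintro q ⟨a₀, x, b, hsn, _, _, hp, _⟩
      exact absurd (sn_aceq (Quotient.exact hp).symm hsn) h
/-! ### AC-invariance of the measure -/

theorem aceq_atomsQ {t r : Tm} (e : ACEq t r) : atomsQ t = atomsQ r := by
  induction e with
  | refl t => rfl
  | symm _ ih => exact ih.symm
  | trans _ _ ih1 ih2 => exact ih1.trans ih2
  | comm t r => simp [atomsQ, add_comm]
  | assoc t r s => simp [atomsQ, add_assoc]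
  | addCong _ _ ih1 ih2 => simp [atomsQ] at *; rw [ih1, ih2]
  | smulCong a _ ih => simpa [atomsQ] using ih
  | appCong e1 e2 _ _ =>
    simp only [atomsQ, atoms_app, Multiset.map_singleton, Multiset.singleton_inj]
    exact Quotient.sound (ACEq.appCong e1 e2)
  | tappCong U e _ =>
    simp only [atomsQ, atoms_tapp, Multiset.map_singleton, Multiset.singleton_inj]
    exact Quotient.sound (ACEq.tappCong U e)
  | lamCong U e _ =>
    simp only [atomsQ, atoms_lam, Multiset.map_singleton, Multiset.singleton_inj]
    exact Quotient.sound (ACEq.lamCong U e)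
  | tlamCong e _ =>
    simp only [atomsQ, atoms_tlam, Multiset.map_singleton, Multiset.singleton_inj]
    exact Quotient.sound (ACEq.tlamCong e)

theorem aceq_wgt {t r : Tm} (e : ACEq t r) : wgt t = wgt r := by
  induction e with
  | refl t => rfl
  | symm _ ih => exact ih.symm
  | trans _ _ ih1 ih2 => exact ih1.trans ih2
  | comm t r => simp; omega
  | assoc t r s => simp; omega
  | addCong _ _ ih1 ih2 => simp; omega
  | smulCong a _ ih => simp; omega
  | appCong _ _ _ _ => rfl
  | tappCong _ _ _ => rfl
  | lamCong _ _ _ => rfl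
  | tlamCong _ _ => rfl

/-! ### Multiset order helpers -/

section CE
open Relation
variable {α : Type*} {r : α → α → Prop}

theorem cutExpand_step {Z : Multiset α} (a : α) : CutExpand r Z (Z + {a}) :=
  ⟨0, a, by simp, by simp⟩

theorem transGen_cutExpand_erase {X : Multiset α} (h : X ≠ 0) (Z : Multiset α) :
    Relation.TransGen (CutExpand r) Z (Z + X) := by
  induction X using Multiset.induction_on with
  | empty => exact absurd rfl h
  | cons a s ih =>
    have hrw : Z + (a ::ₘ s) = (Z + s) + {a} := by
      rw [← Multiset.singleton_add]; ac_rfl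
    rw [hrw]
    by_cases hs : s = 0
    · subst hs; simpa using Relation.TransGen.single (cutExpand_step a)
    · exact (ih hs).tail (cutExpand_step a)

theorem transGen_cutExpand_add_right {s t : Multiset α} (c : Multiset α)
    (h : Relation.TransGen (CutExpand r) s t) :
    Relation.TransGen (CutExpand r) (s + c) (t + c) := by
  induction h with
  | single h => exact .single ((Relation.cutExpand_add_right c).2 h)
  | tail _ h ih => exact ih.tail ((Relation.cutExpand_add_right c).2 h)

end CE

/-! ### The measure -/

def MLT : Multiset TmQ × ℕ → Multiset TmQ × ℕ → Prop :=
  Prod.Lex (Relation.TransGen (Relation.CutExpand AtomLt)) (· < ·)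

def mu (t : Tm) : Multiset TmQ × ℕ := (atomsQ t, wgt t)

theorem mlt_wf : WellFounded MLT :=
  (atomLt_wf.cutExpand.transGen).prod_lex (Nat.lt_wfRel.wf)

theorem mlt_left {M M' : Multiset TmQ} {n n' : ℕ}
    (h : Relation.TransGen (Relation.CutExpand AtomLt) M M') : MLT (M, n) (M', n') :=
  Prod.Lex.left _ _ h

theorem mlt_right {M M' : Multiset TmQ} {n n' : ℕ} (hM : M = M') (hn : n < n') :
    MLT (M, n) (M', n') := by
  subst hM; exact Prod.Lex.right _ hn

theorem atomsQ_eq_zero {t : Tm} (h : atoms t = 0) : atomsQ t = 0 := by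
  simp [atomsQ, h]

theorem mu_lt_of_atom {a x : Tm} (hsn : SN a) (hat : atoms a = {a}) (hr : Red a x) :
    MLT (mu x) (mu a) := by
  apply mlt_left
  apply Relation.TransGen.single
  refine ⟨atomsQ x, toQ a, ?_, ?_⟩
  · rintro q hq
    rw [atomsQ, Multiset.mem_map] at hq
    obtain ⟨b, hb, rfl⟩ := hq
    exact ⟨a, x, b, hsn, hr, hb, rfl, rfl⟩
  · show Multiset.map toQ (atoms x) + {toQ a} = atomsQ a + Multiset.map toQ (atoms x)
    rw [atomsQ, hat, Multiset.map_singleton, add_comm]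

theorem lin_sn_app {t r : Tm} (h : Lin (.app t r)) : SN (.app t r) := by
  cases h with | sn h => exact h

theorem lin_sn_tapp {t : Tm} {U : UTy} (h : Lin (.tapp t U)) : SN (.tapp t U) := by
  cases h with | sn h => exact h

theorem lin_sn_lam {t : Tm} {U : UTy} (h : Lin (.lam U t)) : SN (.lam U t) := by
  cases h with | sn h => exact h

theorem lin_sn_tlam {t : Tm} (h : Lin (.tlam t)) : SN (.tlam t) := by
  cases h with | sn h => exact h
/-! ### The measure decreases along reduction of linear combinations -/

theorem mlt_of_atoms_eq {u' u : Tm} (hM : atomsQ u' = atomsQ u) (hn : wgt u' < wgt u) :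
    MLT (mu u') (mu u) := mlt_right hM hn

theorem mlt_of_atoms_lt {u' u : Tm}
    (h : Relation.TransGen (Relation.CutExpand AtomLt) (atomsQ u') (atomsQ u)) :
    MLT (mu u') (mu u) := mlt_left h

theorem atomsQ_ne_zero {u : Tm} (h : atoms u ≠ 0) : atomsQ u ≠ 0 := by
  simpa [atomsQ, Multiset.map_eq_zero] using h

theorem step_dec {u u' : Tm} (h : Step u u') : Lin u → MLT (mu u') (mu u) := by
  induction h with
  | addZero u =>
    intro _; exact mlt_of_atoms_eq (by simp [atomsQ]) (by simp)
  | zeroSmul u =>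
    intro _
    by_cases hz : atoms u = 0
    · exact mlt_of_atoms_eq (by simp [atomsQ, hz]) (by have := wgt_pos u; simp; omega)
    · apply mlt_of_atoms_lt
      have h1 : atomsQ (Tm.zero) = 0 := rfl
      have h2 : atomsQ (Tm.smul 0 u) = atomsQ u := rfl
      rw [h1, h2]
      simpa using transGen_cutExpand_erase (atomsQ_ne_zero hz) 0
  | oneSmul u =>
    intro _; exact mlt_of_atoms_eq rfl (by have := wgt_pos u; simp; omega)
  | smulZero a =>
    intro _; exact mlt_of_atoms_eq rfl (by simp)
  | smulSmul a b u =>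
    intro _; exact mlt_of_atoms_eq rfl (by have := wgt_pos u; simp; omega)
  | smulAdd a u v =>
    intro _; exact mlt_of_atoms_eq (by simp [atomsQ]) (by simp; omega)
  | factor a b u =>
    intro _
    by_cases hz : atoms u = 0
    · exact mlt_of_atoms_eq (by simp [atomsQ, hz]) (by simp)
    · apply mlt_of_atoms_lt
      have h1 : atomsQ (Tm.smul (a+b) u) = atomsQ u := rfl
      have h2 : atomsQ (Tm.add (.smul a u) (.smul b u)) = atomsQ u + atomsQ u := by
        simp [atomsQ]
      rw [h1, h2]
      exact transGen_cutExpand_erase (atomsQ_ne_zero hz) _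
  | factorOne a u =>
    intro _
    by_cases hz : atoms u = 0
    · exact mlt_of_atoms_eq (by simp [atomsQ, hz]) (by simp)
    · apply mlt_of_atoms_lt
      have h1 : atomsQ (Tm.smul (a+1) u) = atomsQ u := rfl
      have h2 : atomsQ (Tm.add (.smul a u) u) = atomsQ u + atomsQ u := by
        simp [atomsQ]
      rw [h1, h2]
      exact transGen_cutExpand_erase (atomsQ_ne_zero hz) _
  | factorBare u =>
    intro _
    by_cases hz : atoms u = 0
    · exact mlt_of_atoms_eq (by simp [atomsQ, hz]) (by have := wgt_pos u; simp; omega)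
    · apply mlt_of_atoms_lt
      have h1 : atomsQ (Tm.smul 2 u) = atomsQ u := rfl
      have h2 : atomsQ (Tm.add u u) = atomsQ u + atomsQ u := by simp [atomsQ]
      rw [h1, h2]
      exact transGen_cutExpand_erase (atomsQ_ne_zero hz) _
  | appAddL u v w =>
    intro hl; exact mu_lt_of_atom (lin_sn_app hl) rfl (red_of_step (.appAddL u v w))
  | appAddR u v w =>
    intro hl; exact mu_lt_of_atom (lin_sn_app hl) rfl (red_of_step (.appAddR u v w))
  | appSmulL a u v =>
    intro hl; exact mu_lt_of_atom (lin_sn_app hl) rfl (red_of_step (.appSmulL a u v))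
  | appSmulR a u v =>
    intro hl; exact mu_lt_of_atom (lin_sn_app hl) rfl (red_of_step (.appSmulR a u v))
  | appZeroL u =>
    intro hl; exact mu_lt_of_atom (lin_sn_app hl) rfl (red_of_step (.appZeroL u))
  | appZeroR u =>
    intro hl; exact mu_lt_of_atom (lin_sn_app hl) rfl (red_of_step (.appZeroR u))
  | beta U t b hb =>
    intro hl; exact mu_lt_of_atom (lin_sn_app hl) rfl (red_of_step (.beta U t b hb))
  | tbeta t U =>
    intro hl; exact mu_lt_of_atom (lin_sn_tapp hl) rfl (red_of_step (.tbeta t U))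
  | @addL t t' r h ih =>
    intro hl
    rcases Prod.lex_def.1 (ih (lin_add_inv hl).1) with hM | ⟨hM, hn⟩
    · apply mlt_of_atoms_lt
      have h1 : atomsQ (Tm.add t' r) = atomsQ t' + atomsQ r := by simp [atomsQ]
      have h2 : atomsQ (Tm.add t r) = atomsQ t + atomsQ r := by simp [atomsQ]
      rw [h1, h2]
      exact transGen_cutExpand_add_right _ hM
    · refine mlt_of_atoms_eq ?_ ?_
      · simp only [atomsQ, atoms_add, Multiset.map_add]
        simp only [mu] at hM
        rw [show (atoms t').map toQ = atomsQ t' from rfl,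
          show (atoms t).map toQ = atomsQ t from rfl, hM]
      · simp only [mu] at hn; simp; omega
  | @smulC t t' a h ih =>
    intro hl
    rcases Prod.lex_def.1 (ih (lin_smul_inv hl)) with hM | ⟨hM, hn⟩
    · exact mlt_of_atoms_lt hM
    · refine mlt_of_atoms_eq ?_ ?_
      · simpa [mu, atomsQ] using hM
      · simp only [mu] at hn; simp; omega
  | @appL t t' r h ih =>
    intro hl; exact mu_lt_of_atom (lin_sn_app hl) rfl (red_of_step (.appL r h))
  | @appR r r' t h ih =>
    intro hl; exact mu_lt_of_atom (lin_sn_app hl) rfl (red_of_step (.appR t h))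
  | @tappC t t' U h ih =>
    intro hl; exact mu_lt_of_atom (lin_sn_tapp hl) rfl (red_of_step (.tappC U h))
  | @lamC t t' U h ih =>
    intro hl; exact mu_lt_of_atom (lin_sn_lam hl) rfl (red_of_step (.lamC U h))
  | @tlamC t t' h ih =>
    intro hl; exact mu_lt_of_atom (lin_sn_tlam hl) rfl (red_of_step (.tlamC h))

/-! ### `Lin` is preserved by reduction -/

theorem lin_step {u u' : Tm} (h : Step u u') : Lin u → Lin u' := by
  induction h with
  | addZero u => exact fun hl => (lin_add_inv hl).1
  | zeroSmul u => exact fun _ => .zero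
  | oneSmul u => exact lin_smul_inv
  | smulZero a => exact fun _ => .zero
  | smulSmul a b u => exact fun hl => .smul _ (lin_smul_inv (lin_smul_inv hl))
  | smulAdd a u v =>
    exact fun hl => .add (.smul a (lin_add_inv (lin_smul_inv hl)).1)
      (.smul a (lin_add_inv (lin_smul_inv hl)).2)
  | factor a b u => exact fun hl => .smul _ (lin_smul_inv (lin_add_inv hl).1)
  | factorOne a u => exact fun hl => .smul _ (lin_add_inv hl).2
  | factorBare u => exact fun hl => .smul _ (lin_add_inv hl).1
  | appAddL u v w =>
    exact fun hl => .sn (sn_red (lin_sn_app hl) (red_of_step (.appAddL u v w)))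
  | appAddR u v w =>
    exact fun hl => .sn (sn_red (lin_sn_app hl) (red_of_step (.appAddR u v w)))
  | appSmulL a u v =>
    exact fun hl => .sn (sn_red (lin_sn_app hl) (red_of_step (.appSmulL a u v)))
  | appSmulR a u v =>
    exact fun hl => .sn (sn_red (lin_sn_app hl) (red_of_step (.appSmulR a u v)))
  | appZeroL u => exact fun hl => .sn (sn_red (lin_sn_app hl) (red_of_step (.appZeroL u)))
  | appZeroR u => exact fun hl => .sn (sn_red (lin_sn_app hl) (red_of_step (.appZeroR u)))
  | beta U t b hb => exact fun hl => .sn (sn_red (lin_sn_app hl) (red_of_step (.beta U t b hb)))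
  | tbeta t U => exact fun hl => .sn (sn_red (lin_sn_tapp hl) (red_of_step (.tbeta t U)))
  | @addL t t' r h ih => exact fun hl => .add (ih (lin_add_inv hl).1) (lin_add_inv hl).2
  | @smulC t t' a h ih => exact fun hl => .smul a (ih (lin_smul_inv hl))
  | @appL t t' r h ih =>
    exact fun hl => .sn (sn_red (lin_sn_app hl) (red_of_step (.appL r h)))
  | @appR r r' t h ih =>
    exact fun hl => .sn (sn_red (lin_sn_app hl) (red_of_step (.appR t h)))
  | @tappC t t' U h ih =>
    exact fun hl => .sn (sn_red (lin_sn_tapp hl) (red_of_step (.tappC U h)))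
  | @lamC t t' U h ih =>
    exact fun hl => .sn (sn_red (lin_sn_lam hl) (red_of_step (.lamC U h)))
  | @tlamC t t' h ih =>
    exact fun hl => .sn (sn_red (lin_sn_tlam hl) (red_of_step (.tlamC h)))

theorem lin_aceq {t r : Tm} (e : ACEq t r) : Lin t ↔ Lin r := by
  induction e with
  | refl t => exact Iff.rfl
  | symm _ ih => exact ih.symm
  | trans _ _ ih1 ih2 => exact ih1.trans ih2
  | comm t r =>
    constructor
    · exact fun h => .add (lin_add_inv h).2 (lin_add_inv h).1
    · exact fun h => .add (lin_add_inv h).2 (lin_add_inv h).1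
  | assoc t r s =>
    constructor
    · exact fun h => .add (.add (lin_add_inv h).1 (lin_add_inv (lin_add_inv h).2).1)
        (lin_add_inv (lin_add_inv h).2).2
    · exact fun h => .add (lin_add_inv (lin_add_inv h).1).1
        (.add (lin_add_inv (lin_add_inv h).1).2 (lin_add_inv h).2)
  | addCong _ _ ih1 ih2 =>
    constructor
    · exact fun h => .add (ih1.1 (lin_add_inv h).1) (ih2.1 (lin_add_inv h).2)
    · exact fun h => .add (ih1.2 (lin_add_inv h).1) (ih2.2 (lin_add_inv h).2)
  | smulCong a _ ih =>
    constructor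
    · exact fun h => .smul a (ih.1 (lin_smul_inv h))
    · exact fun h => .smul a (ih.2 (lin_smul_inv h))
  | appCong e1 e2 _ _ =>
    constructor
    · exact fun h => .sn (sn_aceq (ACEq.appCong e1 e2) (lin_sn_app h))
    · exact fun h => .sn (sn_aceq (ACEq.appCong e1.symm e2.symm) (lin_sn_app h))
  | tappCong U e _ =>
    constructor
    · exact fun h => .sn (sn_aceq (ACEq.tappCong U e) (lin_sn_tapp h))
    · exact fun h => .sn (sn_aceq (ACEq.tappCong U e.symm) (lin_sn_tapp h))
  | lamCong U e _ =>
    constructor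
    · exact fun h => .sn (sn_aceq (ACEq.lamCong U e) (lin_sn_lam h))
    · exact fun h => .sn (sn_aceq (ACEq.lamCong U e.symm) (lin_sn_lam h))
  | tlamCong e _ =>
    constructor
    · exact fun h => .sn (sn_aceq (ACEq.tlamCong e) (lin_sn_tlam h))
    · exact fun h => .sn (sn_aceq (ACEq.tlamCong e.symm) (lin_sn_tlam h))

theorem lin_red {u u' : Tm} (hl : Lin u) (h : Red u u') : Lin u' := by
  obtain ⟨x, y, e1, st, e2⟩ := h
  exact (lin_aceq e2).1 (lin_step st ((lin_aceq e1).1 hl))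

theorem mu_aceq {t r : Tm} (e : ACEq t r) : mu t = mu r := by
  rw [mu, mu, aceq_atomsQ e, aceq_wgt e]

theorem red_dec {u u' : Tm} (hl : Lin u) (h : Red u u') : MLT (mu u') (mu u) := by
  obtain ⟨x, y, e1, st, e2⟩ := h
  rw [mu_aceq e1, ← mu_aceq e2]
  exact step_dec st ((lin_aceq e1).1 hl)

/-- A linear combination of strongly normalising terms is strongly normalising. -/
theorem lin_sn : ∀ t : Tm, Lin t → SN t := by
  have wf : WellFounded (InvImage MLT mu) := InvImage.wf mu mlt_wf
  intro t
  induction t using wf.induction with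
  | _ t ih => exact fun hl => Acc.intro t fun s hs => ih s (red_dec hl hs) (lin_red hl hs)
/-! ### Closedness is preserved by reduction -/

theorem closedAt_shift {d : ℕ} : ∀ {t : Tm} {k c : ℕ}, Tm.ClosedAt k t →
    Tm.ClosedAt (k + d) (Tm.shift d c t) := by
  intro t
  induction t with
  | var n => intro k c h; simp [Tm.shift, Tm.ClosedAt] at *; split <;> omega
  | lam U t ih =>
    intro k c h
    have := ih (k := k + 1) (c := c + 1) h
    simpa [Tm.shift, Tm.ClosedAt, Nat.add_right_comm k 1 d] using this
  | tlam t ih => intro k c h; exact ih h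
  | app t r iht ihr =>
    intro k c h; exact ⟨iht h.1, ihr h.2⟩
  | tapp t U ih => intro k c h; exact ih h
  | zero => intro k c h; trivial
  | smul a t ih => intro k c h; exact ih h
  | add t r iht ihr => intro k c h; exact ⟨iht h.1, ihr h.2⟩

theorem closedAt_tshift {d : ℕ} : ∀ {t : Tm} {k c : ℕ}, Tm.ClosedAt k t →
    Tm.ClosedAt k (Tm.tshift d c t) := by
  intro t
  induction t with
  | var n => intro k c h; exact h
  | lam U t ih => intro k c h; exact ih h
  | tlam t ih => intro k c h; exact ih h
  | app t r iht ihr => intro k c h; exact ⟨iht h.1, ihr h.2⟩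
  | tapp t U ih => intro k c h; exact ih h
  | zero => intro k c h; trivial
  | smul a t ih => intro k c h; exact ih h
  | add t r iht ihr => intro k c h; exact ⟨iht h.1, ihr h.2⟩

theorem closedAt_subst : ∀ {t s : Tm} {j k : ℕ}, j ≤ k → Tm.ClosedAt (k + 1) t →
    Tm.ClosedAt k s → Tm.ClosedAt k (Tm.subst j s t) := by
  intro t
  induction t with
  | var n =>
    intro s j k hj ht hs
    simp only [Tm.ClosedAt] at ht
    rw [Tm.subst]
    split
    · exact hs
    · simp only [Tm.ClosedAt]; split <;> omega
  | lam U t ih =>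
    intro s j k hj ht hs
    exact ih (by omega) ht (closedAt_shift (d := 1) hs)
  | tlam t ih =>
    intro s j k hj ht hs
    exact ih hj ht (closedAt_tshift hs)
  | app t r iht ihr =>
    intro s j k hj ht hs
    exact ⟨iht hj ht.1 hs, ihr hj ht.2 hs⟩
  | tapp t U ih =>
    intro s j k hj ht hs
    exact ih hj ht hs
  | zero => intro s j k hj ht hs; trivial
  | smul a t ih => intro s j k hj ht hs; exact ih hj ht hs
  | add t r iht ihr =>
    intro s j k hj ht hs
    exact ⟨iht hj ht.1 hs, ihr hj ht.2 hs⟩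

theorem closedAt_tsubst : ∀ {t : Tm} {j : ℕ} {V : UTy} {k : ℕ}, Tm.ClosedAt k t →
    Tm.ClosedAt k (Tm.tsubst j V t) := by
  intro t
  induction t with
  | var n => intro j V k h; exact h
  | lam U t ih => intro j V k h; exact ih h
  | tlam t ih => intro j V k h; exact ih h
  | app t r iht ihr => intro j V k h; exact ⟨iht h.1, ihr h.2⟩
  | tapp t U ih => intro j V k h; exact ih h
  | zero => intro j V k h; trivial
  | smul a t ih => intro j V k h; exact ih h
  | add t r iht ihr => intro j V k h; exact ⟨iht h.1, ihr h.2⟩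

theorem aceq_closedAt {t r : Tm} (e : ACEq t r) : ∀ k, Tm.ClosedAt k t ↔ Tm.ClosedAt k r := by
  induction e with
  | refl t => exact fun _ => Iff.rfl
  | symm _ ih => exact fun k => (ih k).symm
  | trans _ _ ih1 ih2 => exact fun k => (ih1 k).trans (ih2 k)
  | comm t r => exact fun k => and_comm
  | assoc t r s =>
    intro k
    show _ ∧ (_ ∧ _) ↔ (_ ∧ _) ∧ _
    tauto
  | addCong _ _ ih1 ih2 => exact fun k => and_congr (ih1 k) (ih2 k)
  | smulCong a _ ih => exact ih
  | appCong _ _ ih1 ih2 => exact fun k => and_congr (ih1 k) (ih2 k)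
  | tappCong U _ ih => exact ih
  | lamCong U _ ih => exact fun k => ih (k + 1)
  | tlamCong _ ih => exact ih

theorem step_closedAt {t r : Tm} (h : Step t r) : ∀ k, Tm.ClosedAt k t → Tm.ClosedAt k r := by
  induction h with
  | addZero u => exact fun k h => h.1
  | zeroSmul u => exact fun k h => trivial
  | oneSmul u => exact fun k h => h
  | smulZero a => exact fun k h => trivial
  | smulSmul a b u => exact fun k h => h
  | smulAdd a u v => exact fun k h => ⟨h.1, h.2⟩
  | factor a b u => exact fun k h => h.1
  | factorOne a u => exact fun k h => h.2
  | factorBare u => exact fun k h => h.1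
  | appAddL u v w => exact fun k h => ⟨⟨h.1.1, h.2⟩, h.1.2, h.2⟩
  | appAddR u v w => exact fun k h => ⟨⟨h.1, h.2.1⟩, h.1, h.2.2⟩
  | appSmulL a u v => exact fun k h => ⟨h.1, h.2⟩
  | appSmulR a u v => exact fun k h => ⟨h.1, h.2⟩
  | appZeroL u => exact fun k h => trivial
  | appZeroR u => exact fun k h => trivial
  | beta U t b hb => exact fun k h => closedAt_subst (Nat.zero_le k) h.1 h.2
  | tbeta t U => exact fun k h => closedAt_tsubst h
  | addL r _ ih => exact fun k h => ⟨ih k h.1, h.2⟩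
  | smulC a _ ih => exact fun k h => ih k h
  | appL r _ ih => exact fun k h => ⟨ih k h.1, h.2⟩
  | appR t _ ih => exact fun k h => ⟨h.1, ih k h.2⟩
  | tappC U _ ih => exact fun k h => ih k h
  | lamC U _ ih => exact fun k h => ih (k + 1) h
  | tlamC _ ih => exact fun k h => ih k h

theorem red_closed {t r : Tm} (h : Red t r) (hc : t.Closed) : r.Closed := by
  obtain ⟨x, y, e1, st, e2⟩ := h
  exact ((aceq_closedAt e2 0).1 (step_closedAt st 0 ((aceq_closedAt e1 0).1 hc)))

theorem redstar_closed {t r : Tm} (h : RedStar t r) (hc : t.Closed) : r.Closed := by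
  induction h with
  | refl => exact hc
  | tail _ h ih => exact red_closed h ih

theorem sn_redstar {t r : Tm} (h : SN t) (hr : RedStar t r) : SN r := by
  induction hr with
  | refl => exact h
  | tail _ hr ih => exact sn_red ih hr
end LCA
open LCA in
/-- `A ⊕ B` is a reducibility candidate. -/
theorem oplus_isCand {A B : Set Tm} (hA : IsCand A) (hB : IsCand B) :
    IsCand (OplusCl A B) := by
  refine ⟨?_, ?_, ?_⟩
  · intro t ht
    induction ht with
    | base a b htA hrB =>
      obtain ⟨hct, hst⟩ := hA.cr1 htA
      obtain ⟨hcr, hsr⟩ := hB.cr1 hrB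
      exact ⟨⟨hct, hcr⟩, lin_sn _ (.add (.smul a (.sn hst)) (.smul b (.sn hsr)))⟩
    | red _ hstar IH => exact ⟨redstar_closed hstar IH.1, sn_redstar IH.2 hstar⟩
    | neu hn _ IH => exact ⟨hn.1, Acc.intro _ fun s hs => (IH s hs).2⟩
  · exact fun t ht t' h => OplusClP.red ht h
  · exact fun t hn h => OplusClP.neu hn h
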